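/- Let k be a field of characteristic 0, V a finite-dimensional k-vector space, and K ⊆ ⋀²V a subspace. Let A = ⋀(V)/⟨K⟩ be the corresponding commutative quadratic algebra, written as A = T(V)/I where T(V) is the tensor algebra and I is the kernel of the canonical algebra surjection T(V) → A; set I₂ = I ∩ (V⊗V), and define the quadratic dual A^! = T(V*)/⟨I₂^⊥⟩, where I₂^⊥ = {α ∈ V*⊗V* : α vanishes on I₂}. Then the universal enveloping algebra U(h(A)) of the holonomy Lie algebra h(A) = lie(V*)/⟨K^∨⟩ is isomorphic to A^! as a k-algebra; in particular, U(h(A)) is a quadratic algebra. -/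

import Mathlib

open TensorProduct

noncomputable section

variable (k : Type*) [Field k] [CharZero k]

/-- The image of `⋀²V` in `V ⊗ V` under `v ∧ w ↦ v ⊗ w - w ⊗ v`:
the subspace of antisymmetric tensors. -/
def asym (V : Type*) [AddCommGroup V] [Module k V] : Submodule k (V ⊗[k] V) :=
  LinearMap.range
    ((LinearMap.id : V ⊗[k] V →ₗ[k] V ⊗[k] V) - (TensorProduct.comm k V V).toLinearMap)

/-- For a subspace `W ⊆ ⋀²V` (of antisymmetric tensors), the image `ι(W^∨) ⊆ V* ⊗ V*`
of the annihilator `W^∨ = {α ∈ ⋀²(V*) : α(W) = 0}` of `W` under the canonical pairing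
between `⋀²(V*)` and `⋀²V`. -/
def dualRel (V : Type*) [AddCommGroup V] [Module k V]
    (W : Submodule k (V ⊗[k] V)) :
    Submodule k (Module.Dual k V ⊗[k] Module.Dual k V) :=
  asym k (Module.Dual k V) ⊓
    Submodule.comap (TensorProduct.dualDistrib k V V) W.dualAnnihilator

/-- The multiplication map `V ⊗ V → T(V)`, `v ⊗ w ↦ ι v * ι w`. -/
def mul2 (V : Type*) [AddCommGroup V] [Module k V] :
    V ⊗[k] V →ₗ[k] TensorAlgebra k V :=
  TensorProduct.lift ((LinearMap.mul k (TensorAlgebra k V)).compl₁₂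
    (TensorAlgebra.ι k) (TensorAlgebra.ι k))

/-- The defining relations of the commutative quadratic algebra `A = ⋀(V)/⟨K⟩`,
presented as the tensor algebra `T(V)` modulo `v ⊗ v = 0` (`v ∈ V`, giving the
exterior algebra) and `m = 0` (`m ∈ K`). -/
def quadCgaRel (V : Type*) [AddCommGroup V] [Module k V]
    (K : Submodule k (V ⊗[k] V)) :
    TensorAlgebra k V → TensorAlgebra k V → Prop := fun a b =>
  ((∃ v : V, a = TensorAlgebra.ι k v * TensorAlgebra.ι k v) ∨
      (∃ m ∈ K, a = mul2 k V m)) ∧ b = 0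

/-- Writing `A = ⋀(V)/⟨K⟩ = T(V)/I`, this is `I₂ = I ∩ (V ⊗ V)`, the degree-two part
of the defining ideal, viewed as a subspace of `V ⊗ V`. -/
def I2 (V : Type*) [AddCommGroup V] [Module k V] (K : Submodule k (V ⊗[k] V)) :
    Submodule k (V ⊗[k] V) :=
  Submodule.comap (mul2 k V)
    ((RingHom.ker (RingQuot.mkAlgHom k (quadCgaRel k V K)).toRingHom).restrictScalars k)

/-- `I₂^⊥ = {α ∈ V* ⊗ V* : α(I₂) = 0}`. -/
def I2perp (V : Type*) [AddCommGroup V] [Module k V] (K : Submodule k (V ⊗[k] V)) :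
    Submodule k (Module.Dual k V ⊗[k] Module.Dual k V) :=
  Submodule.comap (TensorProduct.dualDistrib k V V) (I2 k V K).dualAnnihilator

/-- The quadratic dual `A^! = T(V*)/⟨I₂^⊥⟩`. -/
def shriekRel (V : Type*) [AddCommGroup V] [Module k V]
    (K : Submodule k (V ⊗[k] V)) :
    TensorAlgebra k (Module.Dual k V) → TensorAlgebra k (Module.Dual k V) → Prop :=
  fun a b => (∃ α ∈ I2perp k V K, a = mul2 k (Module.Dual k V) α) ∧ b = 0

/-- The Lie bracket of a Lie algebra, as a bilinear map. -/
def bracketBilin (L : Type*) [LieRing L] [LieAlgebra k L] : L →ₗ[k] L →ₗ[k] L :=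
  LinearMap.mk₂ k (fun x y => ⁅x, y⁆) add_lie smul_lie lie_add lie_smul

/-- The linear map `M → FreeLieAlgebra k ι` determined by a basis of `M`: the
realization of the free Lie algebra on `M` as the free Lie algebra on a basis. -/
def toFreeLie {ι : Type*} [Fintype ι] [DecidableEq ι] (M : Type*)
    [AddCommGroup M] [Module k M] (b : Module.Basis ι k M) : M →ₗ[k] FreeLieAlgebra k ι :=
  b.constr k fun i => FreeLieAlgebra.of k i

/-- The map `M ⊗ M → FreeLieAlgebra k ι`, `v ⊗ w ↦ ⁅v, w⁆`, identifying `M` with the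
degree-one part of the free Lie algebra via the basis `b`. -/
def brMap {ι : Type*} [Fintype ι] [DecidableEq ι] (M : Type*)
    [AddCommGroup M] [Module k M] (b : Module.Basis ι k M) :
    M ⊗[k] M →ₗ[k] FreeLieAlgebra k ι :=
  TensorProduct.lift ((bracketBilin k (FreeLieAlgebra k ι)).compl₁₂
    (toFreeLie k M b) (toFreeLie k M b))

section Aux

attribute [local instance] LieRing.ofAssociativeRing

lemma mul2_tmul (V : Type*) [AddCommGroup V] [Module k V] (v w : V) :
    mul2 k V (v ⊗ₜ w) = TensorAlgebra.ι k v * TensorAlgebra.ι k w := rfl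

variable (V : Type*) [AddCommGroup V] [Module k V]

/-- span of symmetric squares plus K -/
def symK (K : Submodule k (V ⊗[k] V)) : Submodule k (V ⊗[k] V) :=
  Submodule.span k {x : V ⊗[k] V | ∃ v : V, x = v ⊗ₜ v} ⊔ K

/-- the truncated representation -/
def endo (S : Submodule k (V ⊗[k] V)) :
    V →ₗ[k] Module.End k (k × V × ((V ⊗[k] V) ⧸ S)) where
  toFun v :=
    { toFun := fun p => (0, p.1 • v, S.mkQ (v ⊗ₜ p.2.1))
      map_add' := by
        intro p q
        simp [TensorProduct.tmul_add, add_smul, Prod.ext_iff]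
      map_smul' := by
        intro c p
        simp [Prod.ext_iff, smul_comm c, mul_smul] }
  map_add' := by
    intro v w
    refine LinearMap.ext fun p => ?_
    simp [Prod.ext_iff, smul_add, TensorProduct.tmul_add, TensorProduct.add_tmul]
  map_smul' := by
    intro c v
    refine LinearMap.ext fun p => ?_
    simp [Prod.ext_iff, smul_comm _ c]
    rw [← TensorProduct.smul_tmul', Submodule.Quotient.mk_smul]

def endo2 (S : Submodule k (V ⊗[k] V)) :
    (V ⊗[k] V) →ₗ[k] Module.End k (k × V × ((V ⊗[k] V) ⧸ S)) where
  toFun m :=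
    { toFun := fun p => (0, 0, p.1 • S.mkQ m)
      map_add' := by intro p q; simp [add_smul]
      map_smul' := by intro c p; simp [mul_smul] }
  map_add' := by
    intro m m'; refine LinearMap.ext fun p => ?_; simp [Prod.ext_iff, smul_add]
  map_smul' := by
    intro c m; refine LinearMap.ext fun p => ?_; simp [Prod.ext_iff, smul_comm _ c]

lemma endo_mul2 (S : Submodule k (V ⊗[k] V)) :
    (TensorAlgebra.lift k (endo k V S)).toLinearMap ∘ₗ mul2 k V = endo2 k V S := by
  apply TensorProduct.ext'
  intro v w
  refine LinearMap.ext fun p => ?_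
  simp only [LinearMap.coe_comp, Function.comp_apply, AlgHom.toLinearMap_apply, mul2_tmul,
    map_mul, TensorAlgebra.lift_ι_apply]
  show (endo k V S v) ((endo k V S w) p) = _
  simp [endo, endo2, Prod.ext_iff, TensorProduct.tmul_smul]

lemma endo2_eq_zero {S : Submodule k (V ⊗[k] V)} {m : V ⊗[k] V} (hm : m ∈ S) :
    endo2 k V S m = 0 := by
  refine LinearMap.ext fun p => ?_
  simp [endo2, Prod.ext_iff, (Submodule.Quotient.mk_eq_zero S).2 hm]

lemma lift_endo_mul2 (S : Submodule k (V ⊗[k] V)) (m : V ⊗[k] V) :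
    TensorAlgebra.lift k (endo k V S) (mul2 k V m) = endo2 k V S m := by
  have := congrArg (fun f => f m) (endo_mul2 k V S)
  simpa using this

lemma endo_rel (K : Submodule k (V ⊗[k] V)) :
    ∀ ⦃a b : TensorAlgebra k V⦄, quadCgaRel k V K a b →
      TensorAlgebra.lift k (endo k V (symK k V K)) a
        = TensorAlgebra.lift k (endo k V (symK k V K)) b := by
  rintro a b ⟨h, rfl⟩
  rw [map_zero]
  rcases h with ⟨v, rfl⟩ | ⟨m, hm, rfl⟩
  · rw [← mul2_tmul, lift_endo_mul2]
    exact endo2_eq_zero k V (Submodule.mem_sup_left (Submodule.subset_span ⟨v, rfl⟩))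
  · rw [lift_endo_mul2]
    exact endo2_eq_zero k V (Submodule.mem_sup_right hm)

lemma mem_I2_iff (K : Submodule k (V ⊗[k] V)) (m : V ⊗[k] V) :
    m ∈ I2 k V K ↔ RingQuot.mkAlgHom k (quadCgaRel k V K) (mul2 k V m) = 0 := by
  rfl

lemma I2_eq (K : Submodule k (V ⊗[k] V)) : I2 k V K = symK k V K := by
  apply le_antisymm
  · intro m hm
    rw [mem_I2_iff] at hm
    have h2 := congrArg (RingQuot.liftAlgHom k ⟨_, endo_rel k V K⟩) hm
    rw [RingQuot.liftAlgHom_mkAlgHom_apply, map_zero, lift_endo_mul2] at h2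
    have h3 := congrArg (fun f : Module.End k
      (k × V × ((V ⊗[k] V) ⧸ symK k V K)) => (f (1, 0, 0)).2.2) h2
    simp only [endo2, LinearMap.coe_mk, AddHom.coe_mk, one_smul, LinearMap.zero_apply] at h3
    exact (Submodule.Quotient.mk_eq_zero _).1 h3
  · apply sup_le
    · rw [Submodule.span_le]
      rintro _ ⟨v, rfl⟩
      rw [SetLike.mem_coe, mem_I2_iff]
      have : quadCgaRel k V K (mul2 k V (v ⊗ₜ v)) 0 :=
        ⟨Or.inl ⟨v, (mul2_tmul k V v v)⟩, rfl⟩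
      rw [RingQuot.mkAlgHom_rel k this, map_zero]
    · intro m hm
      rw [mem_I2_iff]
      have : quadCgaRel k V K (mul2 k V m) 0 := ⟨Or.inr ⟨m, hm, rfl⟩, rfl⟩
      rw [RingQuot.mkAlgHom_rel k this, map_zero]

lemma comm_comm_apply {M : Type*} [AddCommGroup M] [Module k M] (β : M ⊗[k] M) :
    (TensorProduct.comm k M M) ((TensorProduct.comm k M M) β) = β := by
  induction β using TensorProduct.induction_on with
  | zero => simp
  | tmul m n => simp [TensorProduct.comm_tmul]
  | add x y hx hy => simp [map_add, hx, hy]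

lemma comm_asym {M : Type*} [AddCommGroup M] [Module k M] {α : M ⊗[k] M}
    (h : α ∈ asym k M) : (TensorProduct.comm k M M) α = -α := by
  obtain ⟨β, rfl⟩ := h
  simp only [LinearMap.sub_apply, LinearMap.id_coe, id_eq, LinearEquiv.coe_coe, map_sub,
    neg_sub]
  rw [comm_comm_apply]

lemma dd_comm (α : Module.Dual k V ⊗[k] Module.Dual k V) (x : V ⊗[k] V) :
    TensorProduct.dualDistrib k V V ((TensorProduct.comm k _ _) α) x
      = TensorProduct.dualDistrib k V V α ((TensorProduct.comm k V V) x) := by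
  induction α using TensorProduct.induction_on with
  | zero => simp
  | tmul f g =>
    rw [TensorProduct.comm_tmul]
    induction x using TensorProduct.induction_on with
    | zero => simp
    | tmul v w => simp [TensorProduct.comm_tmul, TensorProduct.dualDistrib_apply, mul_comm]
    | add x y hx hy => simp [map_add, hx, hy]
  | add a c ha hc => simp [map_add, ha, hc, LinearMap.add_apply]

lemma dd_inj [FiniteDimensional k V] :
    Function.Injective (TensorProduct.dualDistrib k V V) := by
  have b := Module.finBasis k V
  intro x y h
  have h2 := congrArg (TensorProduct.dualDistribInvOfBasis b b) h
  calc x = (TensorProduct.dualDistribInvOfBasis b b ∘ₗ TensorProduct.dualDistrib k V V) x := by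
        rw [TensorProduct.dualDistrib_dualDistribInvOfBasis_right_inverse]; rfl
    _ = (TensorProduct.dualDistribInvOfBasis b b ∘ₗ TensorProduct.dualDistrib k V V) y := h2
    _ = y := by rw [TensorProduct.dualDistrib_dualDistribInvOfBasis_right_inverse]; rfl

lemma mem_asym_of_comm_neg {M : Type*} [AddCommGroup M] [Module k M]
    {α : M ⊗[k] M} (h : (TensorProduct.comm k M M) α = -α) : α ∈ asym k M := by
  refine ⟨(2:k)⁻¹ • α, ?_⟩
  have h2 : (2:k) ≠ 0 := two_ne_zero
  simp only [LinearMap.sub_apply, LinearMap.id_coe, id_eq, LinearEquiv.coe_coe, map_smul, h]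
  rw [sub_neg_eq_add, ← two_smul k α, smul_smul, inv_mul_cancel₀ h2, one_smul]

lemma dualRel_eq_I2perp [FiniteDimensional k V] (K : Submodule k (V ⊗[k] V)) :
    dualRel k V K = I2perp k V K := by
  have hsymm : ∀ v : V, (v ⊗ₜ[k] v) ∈ symK k V K := fun v =>
    Submodule.mem_sup_left (Submodule.subset_span ⟨v, rfl⟩)
  apply le_antisymm
  · rintro α ⟨ha, hk⟩
    simp only [I2perp, Submodule.mem_comap, Submodule.mem_dualAnnihilator, I2_eq]
    intro x hx
    rw [symK, Submodule.mem_sup] at hx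
    obtain ⟨y, hy, z, hz, rfl⟩ := hx
    rw [map_add]
    have hz0 : TensorProduct.dualDistrib k V V α z = 0 := by
      have := Submodule.mem_comap.1 hk
      exact (Submodule.mem_dualAnnihilator _).1 this z hz
    rw [hz0, add_zero]
    refine Submodule.span_induction (p := fun y _ => TensorProduct.dualDistrib k V V α y = 0)
      ?_ ?_ ?_ ?_ hy
    · rintro _ ⟨v, rfl⟩
      have h1 : -(TensorProduct.dualDistrib k V V α (v ⊗ₜ[k] v))
          = TensorProduct.dualDistrib k V V α (v ⊗ₜ[k] v) := by
        have e1 : TensorProduct.dualDistrib k V V ((TensorProduct.comm k _ _) α) (v ⊗ₜ[k] v)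
            = TensorProduct.dualDistrib k V V α (v ⊗ₜ[k] v) := by
          rw [dd_comm, TensorProduct.comm_tmul]
        conv_rhs => rw [← e1]
        rw [comm_asym k ha, map_neg (TensorProduct.dualDistrib k V V) α, LinearMap.neg_apply]
      set a := TensorProduct.dualDistrib k V V α (v ⊗ₜ[k] v) with ha'
      have h3 : (2:k) * a = 0 := by rw [two_mul]; nth_rewrite 2 [← h1]; exact add_neg_cancel a
      rcases mul_eq_zero.mp h3 with h | h
      · exact absurd h two_ne_zero
      · exact h
    · simp
    · intro a b _ _ h1 h2; rw [map_add, h1, h2, add_zero]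
    · intro c a _ h1; rw [map_smul, h1, smul_zero]
  · intro α hα
    have hα' : ∀ x ∈ symK k V K, TensorProduct.dualDistrib k V V α x = 0 := by
      have := Submodule.mem_comap.1 hα
      rw [I2_eq] at this
      exact (Submodule.mem_dualAnnihilator _).1 this
    constructor
    · -- α is antisymmetric
      apply mem_asym_of_comm_neg
      apply dd_inj k V
      rw [map_neg (TensorProduct.dualDistrib k V V) α]
      apply TensorProduct.ext'
      intro v w
      rw [dd_comm, TensorProduct.comm_tmul, LinearMap.neg_apply]
      have hvw := hα' ((v + w) ⊗ₜ (v + w)) (hsymm (v + w))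
      have hv := hα' (v ⊗ₜ v) (hsymm v)
      have hw := hα' (w ⊗ₜ w) (hsymm w)
      simp only [TensorProduct.tmul_add, TensorProduct.add_tmul, map_add] at hvw
      linear_combination hvw - hv - hw
    · refine Submodule.mem_comap.2 ((Submodule.mem_dualAnnihilator _).2 fun x hx => ?_)
      exact hα' x (Submodule.mem_sup_right hx)

def antiM (M : Type*) [AddCommGroup M] [Module k M] : M ⊗[k] M →ₗ[k] M ⊗[k] M :=
  (LinearMap.id : M ⊗[k] M →ₗ[k] M ⊗[k] M) - (TensorProduct.comm k M M).toLinearMap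

lemma antiM_apply (M : Type*) [AddCommGroup M] [Module k M] (x : M ⊗[k] M) :
    antiM k M x = x - (TensorProduct.comm k M M) x := rfl

lemma antiM_tmul (M : Type*) [AddCommGroup M] [Module k M] (f g : M) :
    antiM k M (f ⊗ₜ g) = f ⊗ₜ g - g ⊗ₜ f := by
  simp [antiM, TensorProduct.comm_tmul]

lemma brMap_tmul {ι : Type*} [Fintype ι] [DecidableEq ι] (M : Type*)
    [AddCommGroup M] [Module k M] (b : Module.Basis ι k M) (f g : M) :
    brMap k M b (f ⊗ₜ g) = ⁅toFreeLie k M b f, toFreeLie k M b g⁆ := rfl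

section Main

variable (V : Type*) [AddCommGroup V] [Module k V] [FiniteDimensional k V]
  (n : ℕ) (b : Module.Basis (Fin n) k V) (K : Submodule k (V ⊗[k] V))

local notation "D" => Module.Dual k V
local notation "L" => FreeLieAlgebra k (Fin n)
local notation "R" => RingQuot (shriekRel k V K)

/-- the Lie ideal of relations -/
def Jrel : LieIdeal k (FreeLieAlgebra k (Fin n)) :=
  LieSubmodule.lieSpan k (FreeLieAlgebra k (Fin n))
    (brMap k (Module.Dual k V) b.dualBasis '' (dualRel k V K : Set (D ⊗[k] D)))

/-- the map from the free Lie algebra to the quadratic dual -/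
def phi : FreeLieAlgebra k (Fin n) →ₗ⁅k⁆ RingQuot (shriekRel k V K) :=
  FreeLieAlgebra.lift k fun i =>
    RingQuot.mkAlgHom k (shriekRel k V K) (TensorAlgebra.ι k (b.dualBasis i))

lemma phi_toFreeLie (f : D) :
    phi k V n b K (toFreeLie k D b.dualBasis f)
      = RingQuot.mkAlgHom k (shriekRel k V K) (TensorAlgebra.ι k f) := by
  have h : (phi k V n b K).toLinearMap ∘ₗ toFreeLie k D b.dualBasis
      = (RingQuot.mkAlgHom k (shriekRel k V K)).toLinearMap ∘ₗ TensorAlgebra.ι k := by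
    apply b.dualBasis.ext
    intro i
    simp [toFreeLie, Module.Basis.constr_basis, phi, FreeLieAlgebra.lift_of_apply]
  exact LinearMap.congr_fun h f

lemma phi_brMap (α : D ⊗[k] D) :
    phi k V n b K (brMap k D b.dualBasis α)
      = RingQuot.mkAlgHom k (shriekRel k V K)
          (mul2 k D α) - RingQuot.mkAlgHom k (shriekRel k V K)
          (mul2 k D ((TensorProduct.comm k D D) α)) := by
  have h : (phi k V n b K).toLinearMap ∘ₗ brMap k D b.dualBasis
      = (RingQuot.mkAlgHom k (shriekRel k V K)).toLinearMap ∘ₗ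
          (mul2 k D ∘ₗ antiM k D) := by
    apply TensorProduct.ext'
    intro f g
    simp only [LinearMap.coe_comp, Function.comp_apply, LieHom.coe_toLinearMap,
      AlgHom.toLinearMap_apply, brMap_tmul, LieHom.map_lie, LinearMap.sub_apply,
      LinearMap.id_coe, id_eq, LinearEquiv.coe_coe, TensorProduct.comm_tmul, map_sub,
      mul2_tmul, phi_toFreeLie, antiM_tmul]
    simp [Ring.lie_def, map_mul]
  have h2 := LinearMap.congr_fun h α
  simp only [LinearMap.coe_comp, Function.comp_apply, LieHom.coe_toLinearMap,
    AlgHom.toLinearMap_apply, antiM_apply, map_sub] at h2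
  exact h2
lemma mkmul2_zero {α : D ⊗[k] D} (hα : α ∈ I2perp k V K) :
    RingQuot.mkAlgHom k (shriekRel k V K) (mul2 k D α) = 0 := by
  have : shriekRel k V K (mul2 k D α) 0 := ⟨⟨α, hα, rfl⟩, rfl⟩
  rw [RingQuot.mkAlgHom_rel k this, map_zero]

lemma Jrel_le_ker : Jrel k V n b K ≤ (phi k V n b K).ker := by
  rw [Jrel, LieSubmodule.lieSpan_le]
  rintro _ ⟨α, hα, rfl⟩
  have hα' : α ∈ dualRel k V K := hα
  have hasym : α ∈ asym k D := hα'.1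
  rw [SetLike.mem_coe, LieHom.mem_ker, phi_brMap, comm_asym k hasym,
    map_neg (mul2 k D) α,
    map_neg (RingQuot.mkAlgHom k (shriekRel k V K)) (mul2 k D α), sub_neg_eq_add,
    mkmul2_zero k V K ((dualRel_eq_I2perp k V K) ▸ hα'), add_zero]

end Main

end Aux

section Main2

attribute [local instance] LieRing.ofAssociativeRing

variable (V : Type*) [AddCommGroup V] [Module k V] [FiniteDimensional k V]
  (n : ℕ) (b : Module.Basis (Fin n) k V) (K : Submodule k (V ⊗[k] V))

local notation "D" => Module.Dual k V

/-- quotient map as a Lie algebra hom -/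
def mkL : FreeLieAlgebra k (Fin n) →ₗ⁅k⁆ (FreeLieAlgebra k (Fin n) ⧸ Jrel k V n b K) where
  toLinearMap := (LieSubmodule.Quotient.mk' (Jrel k V n b K)).toLinearMap
  map_lie' := by
    intro x y
    exact LieSubmodule.Quotient.mk_bracket (I := Jrel k V n b K) x y

def phi' : (FreeLieAlgebra k (Fin n) ⧸ Jrel k V n b K) →ₗ⁅k⁆ RingQuot (shriekRel k V K) where
  toLinearMap := Submodule.liftQ (Jrel k V n b K).toSubmodule (phi k V n b K).toLinearMap
    (fun x hx => LinearMap.mem_ker.2 (LieHom.mem_ker.1 (Jrel_le_ker k V n b K hx)))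
  map_lie' := by
    intro x y
    obtain ⟨a, rfl⟩ := LieSubmodule.Quotient.surjective_mk' (Jrel k V n b K) x
    obtain ⟨c, rfl⟩ := LieSubmodule.Quotient.surjective_mk' (Jrel k V n b K) y
    erw [← LieSubmodule.Quotient.mk_bracket (I := Jrel k V n b K)]
    show phi k V n b K ⁅a, c⁆ = ⁅phi k V n b K a, phi k V n b K c⁆
    exact (phi k V n b K).map_lie a c

lemma phi'_mk (a : FreeLieAlgebra k (Fin n)) :
    phi' k V n b K (mkL k V n b K a) = phi k V n b K a := rfl

def gmap : D →ₗ[k] UniversalEnvelopingAlgebra k (FreeLieAlgebra k (Fin n) ⧸ Jrel k V n b K) :=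
  (UniversalEnvelopingAlgebra.ι k).toLinearMap ∘ₗ (mkL k V n b K).toLinearMap
    ∘ₗ toFreeLie k D b.dualBasis

def rho : TensorAlgebra k D →ₐ[k]
    UniversalEnvelopingAlgebra k (FreeLieAlgebra k (Fin n) ⧸ Jrel k V n b K) :=
  TensorAlgebra.lift k (gmap k V n b K)

lemma rho_mul2_anti (α : D ⊗[k] D) :
    rho k V n b K (mul2 k D (antiM k D α))
      = UniversalEnvelopingAlgebra.ι k (mkL k V n b K (brMap k D b.dualBasis α)) := by
  have h : (rho k V n b K).toLinearMap ∘ₗ (mul2 k D ∘ₗ antiM k D)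
      = (UniversalEnvelopingAlgebra.ι k).toLinearMap ∘ₗ (mkL k V n b K).toLinearMap
          ∘ₗ brMap k D b.dualBasis := by
    apply TensorProduct.ext'
    intro f g
    simp only [LinearMap.coe_comp, Function.comp_apply, AlgHom.toLinearMap_apply,
      LieHom.coe_toLinearMap, antiM_tmul, map_sub, mul2_tmul, map_mul, brMap_tmul,
      LieHom.map_lie, Ring.lie_def, TensorAlgebra.lift_ι_apply, rho]
    rfl
  exact LinearMap.congr_fun h α

lemma rho_rel : ∀ ⦃a c : TensorAlgebra k D⦄, shriekRel k V K a c →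
    rho k V n b K a = rho k V n b K c := by
  rintro a c ⟨⟨α, hα, rfl⟩, rfl⟩
  rw [map_zero]
  have hd : α ∈ dualRel k V K := (dualRel_eq_I2perp k V K).symm ▸ hα
  have hasym : α ∈ asym k D := hd.1
  have hbr : brMap k D b.dualBasis α ∈ Jrel k V n b K :=
    LieSubmodule.subset_lieSpan ⟨α, hd, rfl⟩
  have h0 : rho k V n b K (mul2 k D (antiM k D α)) = 0 := by
    rw [rho_mul2_anti,
      show mkL k V n b K (brMap k D b.dualBasis α) = 0 from
        (LieSubmodule.Quotient.mk_eq_zero _).2 hbr,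
      map_zero]
  have hanti : antiM k D α = (2:k) • α := by
    rw [antiM_apply, comm_asym k hasym, two_smul]
    abel
  rw [hanti, map_smul, map_smul] at h0
  rcases smul_eq_zero.1 h0 with h | h
  · exact absurd h two_ne_zero
  · exact h

def Psi : RingQuot (shriekRel k V K) →ₐ[k]
    UniversalEnvelopingAlgebra k (FreeLieAlgebra k (Fin n) ⧸ Jrel k V n b K) :=
  RingQuot.liftAlgHom k ⟨rho k V n b K, rho_rel k V n b K⟩

def Phi : UniversalEnvelopingAlgebra k (FreeLieAlgebra k (Fin n) ⧸ Jrel k V n b K)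
    →ₐ[k] RingQuot (shriekRel k V K) :=
  UniversalEnvelopingAlgebra.lift k (phi' k V n b K)

lemma round1 : (Phi k V n b K).comp (Psi k V n b K) = AlgHom.id k _ := by
  apply RingQuot.ringQuot_ext'
  apply TensorAlgebra.hom_ext
  refine LinearMap.ext fun f => ?_
  simp only [LinearMap.coe_comp, Function.comp_apply, AlgHom.toLinearMap_apply,
    AlgHom.coe_comp, AlgHom.coe_id, id_eq]
  simp only [Psi]
  rw [RingQuot.liftAlgHom_mkAlgHom_apply]
  show Phi k V n b K (rho k V n b K (TensorAlgebra.ι k f)) = _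
  simp only [rho]
  rw [TensorAlgebra.lift_ι_apply]
  show Phi k V n b K (UniversalEnvelopingAlgebra.ι k
    (mkL k V n b K (toFreeLie k D b.dualBasis f))) = _
  simp only [Phi]
  rw [UniversalEnvelopingAlgebra.lift_ι_apply, phi'_mk, phi_toFreeLie]

lemma psi_phi_free (a : FreeLieAlgebra k (Fin n)) :
    Psi k V n b K (phi k V n b K a)
      = UniversalEnvelopingAlgebra.ι k (mkL k V n b K a) := by
  have h : ((Psi k V n b K).toLieHom.comp (phi k V n b K) :
        FreeLieAlgebra k (Fin n) →ₗ⁅k⁆ _)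
      = (UniversalEnvelopingAlgebra.ι k).comp (mkL k V n b K) := by
    apply FreeLieAlgebra.hom_ext
    intro i
    show Psi k V n b K (phi k V n b K (FreeLieAlgebra.of k i)) = _
    simp only [phi, Psi]
    rw [FreeLieAlgebra.lift_of_apply, RingQuot.liftAlgHom_mkAlgHom_apply]
    simp only [rho]
    rw [TensorAlgebra.lift_ι_apply]
    show UniversalEnvelopingAlgebra.ι k
      (mkL k V n b K (toFreeLie k D b.dualBasis (b.dualBasis i))) = _
    rw [toFreeLie, Module.Basis.constr_basis]
    rfl
  exact LieHom.congr_fun h a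

lemma round2 : (Psi k V n b K).comp (Phi k V n b K) = AlgHom.id k _ := by
  apply UniversalEnvelopingAlgebra.hom_ext
  apply LieHom.ext
  intro x
  obtain ⟨a, rfl⟩ := LieSubmodule.Quotient.surjective_mk' (Jrel k V n b K) x
  show Psi k V n b K (Phi k V n b K (UniversalEnvelopingAlgebra.ι k (mkL k V n b K a)))
    = UniversalEnvelopingAlgebra.ι k (mkL k V n b K a)
  simp only [Phi]
  rw [UniversalEnvelopingAlgebra.lift_ι_apply, phi'_mk, psi_phi_free]

end Main2


/-- Let `k` be a field of characteristic 0, `V` a finite-dimensional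
`k`-vector space, and `K ⊆ ⋀²V` a subspace (realized as a subspace of antisymmetric
tensors in `V ⊗ V`).  Let `A = ⋀(V)/⟨K⟩ = T(V)/I` be the corresponding commutative
quadratic algebra, `I₂ = I ∩ (V ⊗ V)`, and `A^! = T(V*)/⟨I₂^⊥⟩` the quadratic dual.
Then the universal enveloping algebra `U(h(A))` of the holonomy Lie algebra
`h(A) = lie(V*)/⟨K^∨⟩` (the free Lie algebra on `V*`, realized on a basis of `V*`,
modulo the Lie ideal generated by the annihilator `K^∨` of `K`) is isomorphic to `A^!`
as a `k`-algebra. -/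
theorem stmt8 (V : Type*) [AddCommGroup V] [Module k V] [FiniteDimensional k V]
    (n : ℕ) (b : Module.Basis (Fin n) k V)
    (K : Submodule k (V ⊗[k] V)) (hK : K ≤ asym k V) :
    Nonempty
      (UniversalEnvelopingAlgebra k
          (FreeLieAlgebra k (Fin n) ⧸
            LieSubmodule.lieSpan k (FreeLieAlgebra k (Fin n))
              (brMap k (Module.Dual k V) b.dualBasis ''
                (dualRel k V K : Set (Module.Dual k V ⊗[k] Module.Dual k V)))) ≃ₐ[k]
        RingQuot (shriekRel k V K)) := by
  exact ⟨AlgEquiv.ofAlgHom (Phi k V n b K) (Psi k V n b K)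
    (round1 k V n b K) (round2 k V n b K)⟩
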